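/- Propositional team logic PT characterizes the set of all team properties containing the empty team: for every finite index set N = {i₁,…,iₙ}, (a) for every formula φ in the language of PT with variables among {p_i : i∈N}, the set {Y ⊆ 2^N : Y ⊨ φ} contains the empty team; and (b) for every set P ⊆ 𝒫(2^N) of teams on N with ∅ ∈ P, there is a formula φ in the language of PT with variables among {p_i : i∈N} such that for every team Y on N, Y ⊨ φ if and only if Y ∈ P. -/

import Mathlib

/-- Formulas of full propositional team logic (FPT), with propositional
variables indexed by a type `V`. -/
inductive PTForm (V : Type) : Type where
  | pos : V → PTForm V
  | neg : V → PTForm V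
  | bot : PTForm V
  | ne : PTForm V
  | dep : List V → V → PTForm V
  | indep : List V → List V → PTForm V
  | incl : List V → List V → PTForm V
  | and : PTForm V → PTForm V → PTForm V
  | tensor : PTForm V → PTForm V → PTForm V
  | nsor : PTForm V → PTForm V → PTForm V
  | bor : PTForm V → PTForm V → PTForm V

/-- Team semantics of full propositional team logic.  A valuation is a
function `V → Bool` and a team is a set of valuations. -/
def PTSat {V : Type} (X : Set (V → Bool)) : PTForm V → Prop
  | .pos i => ∀ s ∈ X, s i = true
  | .neg i => ∀ s ∈ X, s i = false
  | .bot => X = ∅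
  | .ne => X ≠ ∅
  | .dep xs y => ∀ s ∈ X, ∀ s' ∈ X, (∀ i ∈ xs, s i = s' i) → s y = s' y
  | .indep xs ys =>
      ∀ s ∈ X, ∀ s' ∈ X, ∃ s'' ∈ X,
        (∀ i ∈ xs, s'' i = s i) ∧ (∀ j ∈ ys, s'' j = s' j)
  | .incl xs ys => ∀ s ∈ X, ∃ s' ∈ X, ∀ p ∈ List.zip xs ys, s p.1 = s' p.2
  | .and φ ψ => PTSat X φ ∧ PTSat X ψ
  | .tensor φ ψ => ∃ Y Z, X = Y ∪ Z ∧ PTSat Y φ ∧ PTSat Z ψ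
  | .nsor φ ψ =>
      X = ∅ ∨ ∃ Y Z, X = Y ∪ Z ∧ Y.Nonempty ∧ Z.Nonempty ∧ PTSat Y φ ∧ PTSat Z ψ
  | .bor φ ψ => PTSat X φ ∨ PTSat X ψ

/-- The set of propositional variables occurring in a formula. -/
def PTForm.vars {V : Type} : PTForm V → Set V
  | .pos i => {i}
  | .neg i => {i}
  | .bot => ∅
  | .ne => ∅
  | .dep xs y => {i | i ∈ xs} ∪ {y}
  | .indep xs ys => {i | i ∈ xs} ∪ {j | j ∈ ys}
  | .incl xs ys => {i | i ∈ xs} ∪ {j | j ∈ ys}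
  | .and φ ψ => φ.vars ∪ ψ.vars
  | .tensor φ ψ => φ.vars ∪ ψ.vars
  | .nsor φ ψ => φ.vars ∪ ψ.vars
  | .bor φ ψ => φ.vars ∪ ψ.vars

/-- The formula does not contain the atom NE. -/
def PTForm.NEfree {V : Type} : PTForm V → Prop
  | .ne => False
  | .and φ ψ => φ.NEfree ∧ ψ.NEfree
  | .tensor φ ψ => φ.NEfree ∧ ψ.NEfree
  | .nsor φ ψ => φ.NEfree ∧ ψ.NEfree
  | .bor φ ψ => φ.NEfree ∧ ψ.NEfree
  | _ => True

/-- Classical formulas: built from `pᵢ`, `¬pᵢ`, `⊥` using only `∧` and `⊗`. -/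
inductive IsClassical {V : Type} : PTForm V → Prop where
  | pos (i : V) : IsClassical (.pos i)
  | neg (i : V) : IsClassical (.neg i)
  | bot : IsClassical .bot
  | and : ∀ {φ ψ}, IsClassical φ → IsClassical ψ → IsClassical (.and φ ψ)
  | tensor : ∀ {φ ψ}, IsClassical φ → IsClassical ψ → IsClassical (.tensor φ ψ)

/-- The language of strong propositional team logic PT⁺:
atoms `pᵢ`, `¬pᵢ`, `⊥`, `NE` and connectives `∧`, `⊗`, `∨`. -/
inductive IsPTPlus {V : Type} : PTForm V → Prop where
  | pos (i : V) : IsPTPlus (.pos i)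
  | neg (i : V) : IsPTPlus (.neg i)
  | bot : IsPTPlus .bot
  | ne : IsPTPlus .ne
  | and : ∀ {φ ψ}, IsPTPlus φ → IsPTPlus ψ → IsPTPlus (.and φ ψ)
  | tensor : ∀ {φ ψ}, IsPTPlus φ → IsPTPlus ψ → IsPTPlus (.tensor φ ψ)
  | bor : ∀ {φ ψ}, IsPTPlus φ → IsPTPlus ψ → IsPTPlus (.bor φ ψ)

/-- The language of propositional team logic PT:
atoms `pᵢ`, `¬pᵢ`, `⊥` and connectives `∧`, `⊛`, `∨`. -/
inductive IsPT {V : Type} : PTForm V → Prop where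
  | pos (i : V) : IsPT (.pos i)
  | neg (i : V) : IsPT (.neg i)
  | bot : IsPT .bot
  | and : ∀ {φ ψ}, IsPT φ → IsPT ψ → IsPT (.and φ ψ)
  | nsor : ∀ {φ ψ}, IsPT φ → IsPT ψ → IsPT (.nsor φ ψ)
  | bor : ∀ {φ ψ}, IsPT φ → IsPT ψ → IsPT (.bor φ ψ)

/-- The language of propositional union closed logic PU:
atoms `pᵢ`, `¬pᵢ`, `⊥` and connectives `∧`, `⊗`, `⊛`. -/
inductive IsPU {V : Type} : PTForm V → Prop where
  | pos (i : V) : IsPU (.pos i)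
  | neg (i : V) : IsPU (.neg i)
  | bot : IsPU .bot
  | and : ∀ {φ ψ}, IsPU φ → IsPU ψ → IsPU (.and φ ψ)
  | tensor : ∀ {φ ψ}, IsPU φ → IsPU ψ → IsPU (.tensor φ ψ)
  | nsor : ∀ {φ ψ}, IsPU φ → IsPU ψ → IsPU (.nsor φ ψ)

/-- The language of strong propositional union closed logic PU⁺:
atoms `pᵢ`, `¬pᵢ`, `⊥`, `NE` and connectives `∧`, `⊗`, `⊛`. -/
inductive IsPUPlus {V : Type} : PTForm V → Prop where
  | pos (i : V) : IsPUPlus (.pos i)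
  | neg (i : V) : IsPUPlus (.neg i)
  | bot : IsPUPlus .bot
  | ne : IsPUPlus .ne
  | and : ∀ {φ ψ}, IsPUPlus φ → IsPUPlus ψ → IsPUPlus (.and φ ψ)
  | tensor : ∀ {φ ψ}, IsPUPlus φ → IsPUPlus ψ → IsPUPlus (.tensor φ ψ)
  | nsor : ∀ {φ ψ}, IsPUPlus φ → IsPUPlus ψ → IsPUPlus (.nsor φ ψ)

/-- The atom-free team language: atoms `pᵢ`, `¬pᵢ`, `⊥`, `NE` and
connectives `∧`, `⊗`, `⊛`, `∨` (no dependence/independence/inclusion atoms). -/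
inductive IsAtomFree {V : Type} : PTForm V → Prop where
  | pos (i : V) : IsAtomFree (.pos i)
  | neg (i : V) : IsAtomFree (.neg i)
  | bot : IsAtomFree .bot
  | ne : IsAtomFree .ne
  | and : ∀ {φ ψ}, IsAtomFree φ → IsAtomFree ψ → IsAtomFree (.and φ ψ)
  | tensor : ∀ {φ ψ}, IsAtomFree φ → IsAtomFree ψ → IsAtomFree (.tensor φ ψ)
  | nsor : ∀ {φ ψ}, IsAtomFree φ → IsAtomFree ψ → IsAtomFree (.nsor φ ψ)
  | bor : ∀ {φ ψ}, IsAtomFree φ → IsAtomFree ψ → IsAtomFree (.bor φ ψ)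

/-- The literal `pᵢ^{s(i)}`, i.e. `pᵢ` if `s i = 1` and `¬pᵢ` if `s i = 0`. -/
def PTlit {V : Type} (s : V → Bool) (i : V) : PTForm V :=
  if s i then .pos i else .neg i

/-- Conjunction of a nonempty list headed by the first argument. -/
def PTandAux {V : Type} : PTForm V → List (PTForm V) → PTForm V
  | φ, [] => φ
  | φ, ψ :: l => .and φ (PTandAux ψ l)

/-- Conjunction of a list of formulas (only used on nonempty lists). -/
def PTandList {V : Type} : List (PTForm V) → PTForm V
  | [] => .bot
  | φ :: l => PTandAux φ l

/-- The formula `p_{i₁}^{s(i₁)} ∧ … ∧ p_{iₙ}^{s(iₙ)}` describing the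
valuation `s`, where `{i₁, …, iₙ}` enumerates all of `V`. -/
noncomputable def PTdescr {V : Type} [Fintype V] (s : V → Bool) : PTForm V :=
  PTandList ((Finset.univ : Finset V).toList.map (PTlit s))

/-- Tensor disjunction `⊗` of a list of formulas; the empty tensor
disjunction is `⊥`. -/
def PTtensorList {V : Type} (l : List (PTForm V)) : PTForm V :=
  l.foldr PTForm.tensor PTForm.bot

/-- Nonempty disjunction `⊛` of a nonempty list headed by the first argument. -/
def PTnsorAux {V : Type} : PTForm V → List (PTForm V) → PTForm V
  | φ, [] => φ
  | φ, ψ :: l => .nsor φ (PTnsorAux ψ l)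

/-- Nonempty disjunction `⊛` of a list of formulas; the empty nonempty
disjunction is `⊥`. -/
def PTnsorList {V : Type} : List (PTForm V) → PTForm V
  | [] => .bot
  | φ :: l => PTnsorAux φ l

/-- Boolean disjunction `∨` of a list of formulas; the empty Boolean
disjunction is `⊥ ∧ NE`. -/
def PTborList {V : Type} (l : List (PTForm V)) : PTForm V :=
  l.foldr PTForm.bor (PTForm.and PTForm.bot PTForm.ne)

/-- The formula `Θ_X := ⊗_{s∈X} (p_{i₁}^{s(i₁)} ∧ … ∧ p_{iₙ}^{s(iₙ)})`. -/
noncomputable def PTtheta {V : Type} [Fintype V] (X : Finset (V → Bool)) : PTForm V :=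
  PTtensorList (X.toList.map PTdescr)

/-- The formula `Θ*_X := ⊗_{s∈X} (p_{i₁}^{s(i₁)} ∧ … ∧ p_{iₙ}^{s(iₙ)} ∧ NE)`. -/
noncomputable def PTthetaStar {V : Type} [Fintype V] (X : Finset (V → Bool)) : PTForm V :=
  PTtensorList (X.toList.map (fun s => .and (PTdescr s) .ne))

/-- The formula `Θ**_X := ⊛_{s∈X} (p_{i₁}^{s(i₁)} ∧ … ∧ p_{iₙ}^{s(iₙ)})`. -/
noncomputable def PTthetaSS {V : Type} [Fintype V] (X : Finset (V → Bool)) : PTForm V :=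
  PTnsorList (X.toList.map PTdescr)

/-- Logical consequence: every team satisfying all formulas of `Γ`
satisfies `φ`. -/
def PTEntails {V : Type} (Γ : Set (PTForm V)) (φ : PTForm V) : Prop :=
  ∀ X : Set (V → Bool), (∀ ψ ∈ Γ, PTSat X ψ) → PTSat X φ

/-- A team property is flat if a team is in it iff all its singleton
subteams are. -/
def IsFlat {V : Type} (P : Set (Set (V → Bool))) : Prop :=
  ∀ X : Set (V → Bool), X ∈ P ↔ ∀ s ∈ X, ({s} : Set (V → Bool)) ∈ P

/-- A team property is union closed if it is closed under unions of
nonempty subfamilies. -/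
def IsUnionClosed {V : Type} (P : Set (Set (V → Bool))) : Prop :=
  ∀ 𝒳 ⊆ P, 𝒳.Nonempty → ⋃₀ 𝒳 ∈ P

/-- The syntactic De Morgan negation of a classical formula. -/
def PTdeMorgan : PTForm ℕ → PTForm ℕ
  | .pos i => .neg i
  | .neg i => .pos i
  | .bot => .tensor (.pos 0) (.neg 0)
  | .and φ ψ => .tensor (PTdeMorgan φ) (PTdeMorgan ψ)
  | .tensor φ ψ => .and (PTdeMorgan φ) (PTdeMorgan ψ)
  | φ => φ

/-- Application of a substitution `σ` (assigning a formula to each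
propositional variable) to a formula of the atom-free team language. -/
def PTsubst (σ : ℕ → PTForm ℕ) : PTForm ℕ → PTForm ℕ
  | .pos i => σ i
  | .neg i => PTdeMorgan (σ i)
  | .and φ ψ => .and (PTsubst σ φ) (PTsubst σ ψ)
  | .tensor φ ψ => .tensor (PTsubst σ φ) (PTsubst σ ψ)
  | .nsor φ ψ => .nsor (PTsubst σ φ) (PTsubst σ ψ)
  | .bor φ ψ => .bor (PTsubst σ φ) (PTsubst σ ψ)
  | φ => φ

open Classical in
/-- The valuation `s_σ`, with `s_σ(i) = 1` iff `{s} ⊨ σ(pᵢ)`. -/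
noncomputable def PTvalSubst (σ : ℕ → PTForm ℕ) (s : ℕ → Bool) : ℕ → Bool :=
  fun i => if PTSat {s} (σ i) then true else false
section Aux

variable {V : Type}

lemma ptsat_empty_of_isPT : ∀ φ : PTForm V, IsPT φ → PTSat (∅ : Set (V → Bool)) φ := by
  intro φ h
  induction h with
  | pos i => intro s hs; exact absurd hs (Set.notMem_empty s)
  | neg i => intro s hs; exact absurd hs (Set.notMem_empty s)
  | bot => rfl
  | and _ _ ih1 ih2 => exact ⟨ih1, ih2⟩
  | nsor _ _ _ _ => exact Or.inl rfl
  | bor _ _ ih1 _ => exact Or.inl ih1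

lemma isPT_lit (s : V → Bool) (i : V) : IsPT (PTlit s i) := by
  unfold PTlit; split
  · exact IsPT.pos i
  · exact IsPT.neg i

lemma ptsat_lit (Y : Set (V → Bool)) (s : V → Bool) (i : V) :
    PTSat Y (PTlit s i) ↔ ∀ t ∈ Y, t i = s i := by
  unfold PTlit
  split
  · next h => simp only [PTSat, h]
  · next h =>
    have hs : s i = false := Bool.eq_false_iff.mpr h
    simp only [PTSat, hs]

lemma ptsat_andAux (l : List (PTForm V)) : ∀ (φ : PTForm V) (Y : Set (V → Bool)),
    PTSat Y (PTandAux φ l) ↔ PTSat Y φ ∧ ∀ ψ ∈ l, PTSat Y ψ := by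
  induction l with
  | nil => intro φ Y; simp [PTandAux]
  | cons χ r ih =>
    intro φ Y
    simp only [PTandAux, PTSat, ih χ Y, List.mem_cons]
    constructor
    · rintro ⟨h1, h2, h3⟩
      exact ⟨h1, by rintro ψ (rfl | hm); exact h2; exact h3 ψ hm⟩
    · rintro ⟨h1, h2⟩
      exact ⟨h1, h2 χ (Or.inl rfl), fun ψ hm => h2 ψ (Or.inr hm)⟩

lemma isPT_andAux (l : List (PTForm V)) : ∀ φ : PTForm V, IsPT φ → (∀ ψ ∈ l, IsPT ψ) →
    IsPT (PTandAux φ l) := by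
  induction l with
  | nil => intro φ hφ _; exact hφ
  | cons χ r ih =>
    intro φ hφ hl
    exact IsPT.and hφ (ih χ (hl χ (List.mem_cons_self))
      (fun ψ hm => hl ψ (List.mem_cons_of_mem _ hm)))

lemma ptsat_andList (m : List (PTForm V)) (hm : m ≠ []) (Y : Set (V → Bool)) :
    PTSat Y (PTandList m) ↔ ∀ ψ ∈ m, PTSat Y ψ := by
  cases m with
  | nil => exact absurd rfl hm
  | cons φ l =>
    simp only [PTandList, ptsat_andAux, List.mem_cons]
    constructor
    · rintro ⟨h1, h2⟩ ψ (rfl | hm'); exact h1; exact h2 ψ hm'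
    · intro h; exact ⟨h φ (Or.inl rfl), fun ψ hm' => h ψ (Or.inr hm')⟩

lemma isPT_andList (m : List (PTForm V)) (hm : ∀ ψ ∈ m, IsPT ψ) : IsPT (PTandList m) := by
  cases m with
  | nil => exact IsPT.bot
  | cons φ l =>
    exact isPT_andAux l φ (hm φ (List.mem_cons_self))
      (fun ψ h => hm ψ (List.mem_cons_of_mem _ h))

variable [Fintype V] [Nonempty V]

lemma isPT_descr (s : V → Bool) : IsPT (PTdescr s) := by
  apply isPT_andList
  intro ψ hψ
  rcases List.mem_map.mp hψ with ⟨i, _, rfl⟩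
  exact isPT_lit s i

lemma ptsat_descr (s : V → Bool) (Y : Set (V → Bool)) :
    PTSat Y (PTdescr s) ↔ Y ⊆ {s} := by
  have hne : (Finset.univ : Finset V).toList ≠ [] := by
    simp [Finset.toList_eq_nil, Finset.univ_eq_empty_iff]
  rw [PTdescr, ptsat_andList _ (by simpa using hne)]
  constructor
  · intro h t ht
    have : ∀ i : V, t i = s i := by
      intro i
      have hmem : PTlit s i ∈ (Finset.univ : Finset V).toList.map (PTlit s) :=
        List.mem_map.mpr ⟨i, by simp, rfl⟩
      exact (ptsat_lit Y s i).mp (h _ hmem) t ht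
    exact Set.mem_singleton_iff.mpr (funext this)
  · intro h ψ hψ
    rcases List.mem_map.mp hψ with ⟨i, _, rfl⟩
    refine (ptsat_lit Y s i).mpr ?_
    intro t ht
    rw [Set.mem_singleton_iff.mp (h ht)]

lemma ptsat_nsor_descr (l : List (V → Bool)) : ∀ Y : Set (V → Bool),
    PTSat Y (PTnsorList (l.map PTdescr)) ↔ Y = ∅ ∨ Y = {t | t ∈ l} := by
  induction l with
  | nil => intro Y; simp [PTnsorList, PTSat]
  | cons s l' ih =>
    intro Y
    cases l' with
    | nil =>
      simp only [List.map, PTnsorList, PTnsorAux, ptsat_descr]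
      rw [Set.subset_singleton_iff_eq]
      constructor
      · rintro (h | h); exact Or.inl h
        right; rw [h]; ext t; simp
      · rintro (h | h); exact Or.inl h
        right; rw [h]; ext t; simp
    | cons u r =>
      have hform : PTnsorList ((s :: u :: r).map PTdescr) =
          .nsor (PTdescr s) (PTnsorList ((u :: r).map PTdescr)) := rfl
      rw [hform]
      show Y = ∅ ∨ _ ↔ _
      constructor
      · rintro (h | ⟨Z, W, rfl, hZne, hWne, hZ, hW⟩)
        · exact Or.inl h
        · right
          have hZs : Z = {s} := Set.Nonempty.subset_singleton_iff hZne |>.mp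
            ((ptsat_descr s Z).mp hZ)
          rcases (ih W).mp hW with h | h
          · exact absurd h (Set.nonempty_iff_ne_empty.mp hWne)
          · rw [hZs, h]; ext t; simp
      · rintro (h | h)
        · exact Or.inl h
        · right
          refine ⟨{s}, {t | t ∈ u :: r}, ?_, Set.singleton_nonempty s, ⟨u, by simp⟩,
            (ptsat_descr s _).mpr (subset_refl _), (ih _).mpr (Or.inr rfl)⟩
          rw [h]; ext t; simp

lemma isPT_nsorAux (l : List (PTForm V)) : ∀ φ : PTForm V, IsPT φ → (∀ ψ ∈ l, IsPT ψ) →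
    IsPT (PTnsorAux φ l) := by
  induction l with
  | nil => intro φ hφ _; exact hφ
  | cons χ r ih =>
    intro φ hφ hl
    exact IsPT.nsor hφ (ih χ (hl χ (List.mem_cons_self))
      (fun ψ hm => hl ψ (List.mem_cons_of_mem _ hm)))

lemma isPT_nsorList (m : List (PTForm V)) (hm : ∀ ψ ∈ m, IsPT ψ) : IsPT (PTnsorList m) := by
  cases m with
  | nil => exact IsPT.bot
  | cons φ l =>
    exact isPT_nsorAux l φ (hm φ (List.mem_cons_self))
      (fun ψ h => hm ψ (List.mem_cons_of_mem _ h))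

lemma ptsat_foldr_bor (M : List (PTForm V)) : ∀ Y : Set (V → Bool),
    PTSat Y (M.foldr PTForm.bor PTForm.bot) ↔ Y = ∅ ∨ ∃ ψ ∈ M, PTSat Y ψ := by
  induction M with
  | nil => intro Y; simp [PTSat]
  | cons φ r ih =>
    intro Y
    show PTSat Y φ ∨ _ ↔ _
    rw [ih Y]
    constructor
    · rintro (h | h | ⟨ψ, hm, hψ⟩)
      · exact Or.inr ⟨φ, List.mem_cons_self, h⟩
      · exact Or.inl h
      · exact Or.inr ⟨ψ, List.mem_cons_of_mem _ hm, hψ⟩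
    · rintro (h | ⟨ψ, hm, hψ⟩)
      · exact Or.inr (Or.inl h)
      · rcases List.mem_cons.mp hm with rfl | hm'
        · exact Or.inl hψ
        · exact Or.inr (Or.inr ⟨ψ, hm', hψ⟩)

lemma isPT_foldr_bor (M : List (PTForm V)) (hM : ∀ ψ ∈ M, IsPT ψ) :
    IsPT (M.foldr PTForm.bor PTForm.bot) := by
  induction M with
  | nil => exact IsPT.bot
  | cons φ r ih =>
    exact IsPT.bor (hM φ (List.mem_cons_self))
      (ih (fun ψ h => hM ψ (List.mem_cons_of_mem _ h)))

end Aux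

/-- **PT characterizes the team properties containing the empty team.**
(a) Every PT formula is satisfied by the empty team; (b) every team property
containing the empty team is definable by a PT formula. -/
theorem pt_characterizes_empty_team_properties (V : Type) [Fintype V] [Nonempty V] :
    (∀ φ : PTForm V, IsPT φ → PTSat (∅ : Set (V → Bool)) φ) ∧
    (∀ P : Set (Set (V → Bool)), ∅ ∈ P →
      ∃ φ : PTForm V, IsPT φ ∧
        ∀ Y : Set (V → Bool), PTSat Y φ ↔ Y ∈ P) := by
  constructor
  · exact fun φ h => ptsat_empty_of_isPT φ h
  · intro P hP
    classical
    set L : List (Set (V → Bool)) := (Set.toFinite P).toFinset.toList with hL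
    have hmemL : ∀ X, X ∈ L ↔ X ∈ P := by
      intro X; simp [hL, Set.Finite.mem_toFinset]
    set enum : Set (V → Bool) → List (V → Bool) :=
      fun X => (Set.toFinite X).toFinset.toList with henum
    have hmemE : ∀ (X : Set (V → Bool)) (t : V → Bool), t ∈ enum X ↔ t ∈ X := by
      intro X t; simp [henum, Set.Finite.mem_toFinset]
    refine ⟨(L.map (fun X => PTnsorList ((enum X).map PTdescr))).foldr .bor .bot, ?_, ?_⟩
    · apply isPT_foldr_bor; intro ψ hψ
      rcases List.mem_map.mp hψ with ⟨X, _, rfl⟩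
      apply isPT_nsorList; intro χ hχ
      rcases List.mem_map.mp hχ with ⟨s, _, rfl⟩
      exact isPT_descr s
    · intro Y
      rw [ptsat_foldr_bor]
      constructor
      · rintro (rfl | ⟨ψ, hm, hψ⟩)
        · exact hP
        · rcases List.mem_map.mp hm with ⟨X, hX, rfl⟩
          rcases (ptsat_nsor_descr _ Y).mp hψ with rfl | h
          · exact hP
          · have hYX : Y = X := by rw [h]; ext t; simp [hmemE]
            rw [hYX]; exact (hmemL X).mp hX
      · intro hY
        right
        refine ⟨PTnsorList ((enum Y).map PTdescr),
          List.mem_map.mpr ⟨Y, (hmemL Y).mpr hY, rfl⟩, ?_⟩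
        apply (ptsat_nsor_descr _ Y).mpr
        right; ext t; simp [hmemE]
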